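/- Fix 0 < ε < d⁻⁴·(1/(16π))² and let d ≥ 2. Suppose W_i ∈ ℝ^{n_i×n_{i−1}} satisfies the Weight Distribution Condition with constant ε for i = 1,…,d. Then for all nonzero x, y ∈ ℝ^k, writing x_d := (Π_{i=d}^1 W_{i,+,x})·x, y_d := (Π_{i=d}^1 W_{i,+,y})·y, θ_d := ∠(x_d, y_d), and θ̄_d := g^{∘d}(∠(x,y)), we have |θ_d − θ̄_d| ≤ 4·d·√ε. -/

import Mathlib

open Real Filter Set MeasureTheory ProbabilityTheory Matrix
open scoped Classical BigOperators NNReal ENNReal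

noncomputable section

namespace DPR

/-- Euclidean dot product on `Fin n → ℝ`. -/
def dotp {n : ℕ} (u v : Fin n → ℝ) : ℝ := ∑ i, u i * v i

/-- Euclidean norm on `Fin n → ℝ`. -/
def nrm {n : ℕ} (v : Fin n → ℝ) : ℝ := Real.sqrt (dotp v v)

/-- Angle between two vectors. -/
def angl {n : ℕ} (u v : Fin n → ℝ) : ℝ := Real.arccos (dotp u v / (nrm u * nrm v))

/-- Spectral norm of a matrix: the operator norm of the induced map between
Euclidean spaces. -/
def specNorm {a b : ℕ} (M : Matrix (Fin a) (Fin b) ℝ) : ℝ :=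
  ‖LinearMap.toContinuousLinearMap (Matrix.toEuclideanLin M)‖

/-- The symmetric matrix `M_{x̂↔ŷ}` sending `x̂ ↦ ŷ`, `ŷ ↦ x̂` and vanishing on
`span{x,y}ᗮ`. -/
def swapMat {n : ℕ} (x y : Fin n → ℝ) : Matrix (Fin n) (Fin n) ℝ :=
  let u := (nrm x)⁻¹ • x
  let v := (nrm y)⁻¹ • y
  let c := dotp u v
  let w := v - c • u
  if dotp w w = 0 then c • Matrix.vecMulVec u u
  else
    c • Matrix.vecMulVec u u + Matrix.vecMulVec u w + Matrix.vecMulVec w u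
      - (c / dotp w w) • Matrix.vecMulVec w w

/-- `Q_{x,y} = ((π − θ)/(2π))·I + (sin θ/(2π))·M_{x̂↔ŷ}`. -/
def Qmat {k : ℕ} (x y : Fin k → ℝ) : Matrix (Fin k) (Fin k) ℝ :=
  ((π - angl x y) / (2 * π)) • (1 : Matrix (Fin k) (Fin k) ℝ)
    + (Real.sin (angl x y) / (2 * π)) • swapMat x y

/-- `Φ_{z,w} = ((π − 2θ)/π)·I + (2 sin θ/π)·M_{ẑ↔ŵ}`. -/
def Phi {n : ℕ} (z w : Fin n → ℝ) : Matrix (Fin n) (Fin n) ℝ :=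
  ((π - 2 * angl z w) / π) • (1 : Matrix (Fin n) (Fin n) ℝ)
    + (2 * Real.sin (angl z w) / π) • swapMat z w

/-- `W_{+,v} = diag(1_{Wv>0})·W`. -/
def posPart {a b : ℕ} (W : Matrix (Fin a) (Fin b) ℝ) (v : Fin b → ℝ) :
    Matrix (Fin a) (Fin b) ℝ :=
  Matrix.of fun i j => if 0 < W.mulVec v i then W i j else 0

/-- Weight Distribution Condition with constant `ε`. -/
def WDC {a k : ℕ} (W : Matrix (Fin a) (Fin k) ℝ) (ε : ℝ) : Prop :=
  ∀ x y : Fin k → ℝ, x ≠ 0 → y ≠ 0 →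
    specNorm ((posPart W x)ᵀ * posPart W y - Qmat x y) ≤ ε

/-- `A_z = diag(sgn(Az))·A`. -/
def signedMat {a b : ℕ} (A : Matrix (Fin a) (Fin b) ℝ) (z : Fin b → ℝ) :
    Matrix (Fin a) (Fin b) ℝ :=
  Matrix.of fun i j => Real.sign (A.mulVec z i) * A i j

/-- Entrywise ReLU. -/
def reluV {a : ℕ} (v : Fin a → ℝ) : Fin a → ℝ := fun i => max (v i) 0

/-- Entrywise absolute value. -/
def absV {a : ℕ} (v : Fin a → ℝ) : Fin a → ℝ := fun i => |v i|

/-- The `d`-layer ReLU network `G(x) = relu(W_d ⋯ relu(W_1 x) ⋯)`. -/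
def net (n : ℕ → ℕ) (W : ∀ i : ℕ, Matrix (Fin (n (i + 1))) (Fin (n i)) ℝ) :
    (d : ℕ) → (Fin (n 0) → ℝ) → Fin (n d) → ℝ
  | 0, x => x
  | d + 1, x => reluV ((W d).mulVec (net n W d x))

/-- The product `Π_{i=d}^1 W_{i,+,x}`. -/
def layerProd (n : ℕ → ℕ) (W : ∀ i : ℕ, Matrix (Fin (n (i + 1))) (Fin (n i)) ℝ) :
    (d : ℕ) → (Fin (n 0) → ℝ) → Matrix (Fin (n d)) (Fin (n 0)) ℝ
  | 0, _ => 1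
  | d + 1, x => posPart (W d) ((layerProd n W d x).mulVec x) * layerProd n W d x

/-- The matrix `W_{i+1,+,x}` (the `(i+1)`-st layer, zero-indexed as `i`). -/
def layerPos (n : ℕ → ℕ) (W : ∀ i : ℕ, Matrix (Fin (n (i + 1))) (Fin (n i)) ℝ)
    (i : ℕ) (x : Fin (n 0) → ℝ) : Matrix (Fin (n (i + 1))) (Fin (n i)) ℝ :=
  posPart (W i) ((layerProd n W i x).mulVec x)

/-- `g(θ) = arccos((cos θ·(π − θ) + sin θ)/π)`. -/
def gfun (θ : ℝ) : ℝ := Real.arccos ((Real.cos θ * (π - θ) + Real.sin θ) / π)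

/-- The sequence `θ_0 = θ₀`, `θ_{i+1} = g(θ_i)`. -/
def thetaSeq (θ₀ : ℝ) : ℕ → ℝ
  | 0 => θ₀
  | i + 1 => gfun (thetaSeq θ₀ i)

/-- `ρ_d`. -/
def rho (d : ℕ) : ℝ :=
  -(2 * Real.sin (thetaSeq π d)) / π +
    ((π - 2 * thetaSeq π d) / π) *
      ∑ i ∈ Finset.range d,
        (Real.sin (thetaSeq π i) / π) * ∏ j ∈ Finset.Ico (i + 1) d, (π - thetaSeq π j) / π

/-- The vector `h_{x,y}`. -/
def hvec (d : ℕ) {k : ℕ} (x y : Fin k → ℝ) : Fin k → ℝ :=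
  (-(nrm y / 2 ^ d) * ((π - 2 * thetaSeq (angl x y) d) / π) *
      ∏ i ∈ Finset.range d, (π - thetaSeq (angl x y) i) / π) • ((nrm y)⁻¹ • y) +
    ((1 / 2 ^ d) *
        (nrm x -
          nrm y *
            (2 * Real.sin (thetaSeq (angl x y) d) / π -
              ((π - 2 * thetaSeq (angl x y) d) / π) *
                ∑ i ∈ Finset.range d,
                  (Real.sin (thetaSeq (angl x y) i) / π) *
                    ∏ j ∈ Finset.Ico (i + 1) d, (π - thetaSeq (angl x y) j) / π))) •
      ((nrm x)⁻¹ • x)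

/-- The vector `h̃_{x,y}`. -/
def htil (d : ℕ) {k : ℕ} (x y : Fin k → ℝ) : Fin k → ℝ :=
  (1 / 2 ^ d) •
    ((∏ i ∈ Finset.range d, (π - thetaSeq (angl x y) i) / π) • y +
      (∑ i ∈ Finset.range d,
          (Real.sin (thetaSeq (angl x y) i) / π) *
            ∏ j ∈ Finset.Ico (i + 1) d, (π - thetaSeq (angl x y) j) / π) •
        ((nrm y / nrm x) • x))

/-- The set `S_{ε,x₀}`. -/
def Sset (d : ℕ) {k : ℕ} (ε : ℝ) (x₀ : Fin k → ℝ) : Set (Fin k → ℝ) :=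
  {x | x ≠ 0 ∧ nrm (hvec d x x₀) ≤ ε / 2 ^ d * max (nrm x) (nrm x₀)}

/-- The vector `v̄_{x,y}`. -/
def vbar (n : ℕ → ℕ) (W : ∀ i : ℕ, Matrix (Fin (n (i + 1))) (Fin (n i)) ℝ) (d : ℕ)
    (x y : Fin (n 0) → ℝ) : Fin (n 0) → ℝ :=
  (layerProd n W d x)ᵀ.mulVec ((layerProd n W d x).mulVec x) -
    (layerProd n W d x)ᵀ.mulVec
      ((Phi ((layerProd n W d x).mulVec x) ((layerProd n W d y).mulVec y)).mulVec
        ((layerProd n W d y).mulVec y))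

/-- The objective `f(x) = (1/2)·‖ |A G(x)| − |A G(x₀)| ‖²`. -/
def objf (n : ℕ → ℕ) (W : ∀ i : ℕ, Matrix (Fin (n (i + 1))) (Fin (n i)) ℝ) (d m : ℕ)
    (A : Matrix (Fin m) (Fin (n d)) ℝ) (x₀ x : Fin (n 0) → ℝ) : ℝ :=
  (1 / 2) * nrm (absV (A.mulVec (net n W d x)) - absV (A.mulVec (net n W d x₀))) ^ 2

/-- One-sided directional derivative `D_v f(x) = L`. -/
def HasDirDeriv {k : ℕ} (f : (Fin k → ℝ) → ℝ) (x v : Fin k → ℝ) (L : ℝ) : Prop :=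
  Filter.Tendsto (fun t : ℝ => (f (x + t • v) - f x) / t) (nhdsWithin 0 (Set.Ioi 0)) (nhds L)

/-- Range Restricted Concentration Property with constant `ε`. -/
def RRCP (n : ℕ → ℕ) (W : ∀ i : ℕ, Matrix (Fin (n (i + 1))) (Fin (n i)) ℝ) (d m : ℕ)
    (A : Matrix (Fin m) (Fin (n d)) ℝ) (ε : ℝ) : Prop :=
  ∀ x y x₁ x₂ x₃ x₄ : Fin (n 0) → ℝ, x ≠ 0 → y ≠ 0 →
    |dotp
        ((((signedMat A (net n W d x))ᵀ * signedMat A (net n W d y)) -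
              Phi (net n W d x) (net n W d y)).mulVec
          (net n W d x₁ - net n W d x₂))
        (net n W d x₃ - net n W d x₄)| ≤
      7 * ε * nrm (net n W d x₁ - net n W d x₂) * nrm (net n W d x₃ - net n W d x₄)

/-- Law of an `a × b` matrix with i.i.d. `N(0, v)` entries. -/
def gaussMatrix (a b : ℕ) (v : ℝ≥0) : Measure (Fin a → Fin b → ℝ) :=
  Measure.pi fun _ : Fin a => Measure.pi fun _ : Fin b => gaussianReal 0 v

instance (a b : ℕ) (v : ℝ≥0) : IsProbabilityMeasure (gaussMatrix a b v) := by
  unfold gaussMatrix; infer_instance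

/-- Extend a `Fin d`-indexed family of weight matrices to an `ℕ`-indexed one. -/
def extW (d : ℕ) (n : ℕ → ℕ)
    (ω : ∀ i : Fin d, Fin (n (i.1 + 1)) → Fin (n i.1) → ℝ) (i : ℕ) :
    Matrix (Fin (n (i + 1))) (Fin (n i)) ℝ :=
  if h : i < d then Matrix.of (ω ⟨i, h⟩) else 0

/-- Joint law of the `d` Gaussian weight matrices (variances `1/n_i`) and the
Gaussian measurement matrix (variance `1/m`). -/
def netMeasure (d m : ℕ) (n : ℕ → ℕ) :
    Measure ((∀ i : Fin d, Fin (n (i.1 + 1)) → Fin (n i.1) → ℝ) × (Fin m → Fin (n d) → ℝ)) :=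
  (Measure.pi fun i : Fin d => gaussMatrix (n (i.1 + 1)) (n i.1) ((n (i.1 + 1) : ℝ≥0))⁻¹).prod
    (gaussMatrix m (n d) ((m : ℝ≥0))⁻¹)

/-- The geometric conclusion: outside two small balls around `x₀` and `−ρ_d·x₀`
there is a descent direction, and the origin is a local maximum direction-wise. -/
def DescentConcl (n : ℕ → ℕ) (W : ∀ i : ℕ, Matrix (Fin (n (i + 1))) (Fin (n i)) ℝ)
    (d m : ℕ) (A : Matrix (Fin m) (Fin (n d)) ℝ) (ε K₂ : ℝ) : Prop :=
  ∀ x₀ : Fin (n 0) → ℝ, x₀ ≠ 0 →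
    (∀ x : Fin (n 0) → ℝ, x ≠ 0 →
        ¬nrm (x - x₀) < K₂ * (d : ℝ) ^ 3 * ε ^ ((1 : ℝ) / 4) * nrm x₀ →
        ¬nrm (x + rho d • x₀) < K₂ * (d : ℝ) ^ 14 * ε ^ ((1 : ℝ) / 4) * nrm x₀ →
        ∃ v : Fin (n 0) → ℝ, ∃ L : ℝ,
          L < 0 ∧ HasDirDeriv (objf n W d m A x₀) x (-v) L) ∧
    ∀ x : Fin (n 0) → ℝ, x ≠ 0 →
      ∃ L : ℝ, L < 0 ∧ HasDirDeriv (objf n W d m A x₀) 0 x L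
lemma dotp_eq_dot {n : ℕ} (u v : Fin n → ℝ) : dotp u v = u ⬝ᵥ v := rfl

def ev {n : ℕ} (v : Fin n → ℝ) : EuclideanSpace ℝ (Fin n) := (WithLp.equiv 2 _).symm v

lemma norm_ev {n : ℕ} (v : Fin n → ℝ) : ‖ev v‖ = nrm v := by
  rw [EuclideanSpace.norm_eq]
  simp [ev, nrm, dotp, sq, Real.norm_eq_abs, abs_mul_abs_self]

lemma inner_ev {n : ℕ} (u v : Fin n → ℝ) : (inner ℝ (ev u) (ev v) : ℝ) = dotp u v := by
  simp [ev, PiLp.inner_apply, RCLike.inner_apply, dotp, mul_comm]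

lemma abs_dotp_le {n : ℕ} (u v : Fin n → ℝ) : |dotp u v| ≤ nrm u * nrm v := by
  rw [← inner_ev, ← norm_ev u, ← norm_ev v]
  exact abs_real_inner_le_norm _ _

lemma nrm_mulVec_le {a b : ℕ} (M : Matrix (Fin a) (Fin b) ℝ) (v : Fin b → ℝ) :
    nrm (M.mulVec v) ≤ specNorm M * nrm v := by
  have h : ‖ev (M.mulVec v)‖ ≤ specNorm M * ‖ev v‖ := by
    have h := (LinearMap.toContinuousLinearMap (Matrix.toEuclideanLin M)).le_opNorm (ev v)
    simpa [Matrix.toEuclideanLin_apply_piLp_toLp, ev, specNorm] using h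
  rwa [norm_ev, norm_ev] at h

lemma nrm_nonneg {n : ℕ} (v : Fin n → ℝ) : 0 ≤ nrm v := Real.sqrt_nonneg _

lemma dotp_self_nonneg {n : ℕ} (v : Fin n → ℝ) : 0 ≤ dotp v v :=
  Finset.sum_nonneg fun i _ => mul_self_nonneg _

lemma nrm_sq {n : ℕ} (v : Fin n → ℝ) : nrm v ^ 2 = dotp v v :=
  Real.sq_sqrt (dotp_self_nonneg v)

lemma dotp_self_pos {n : ℕ} {v : Fin n → ℝ} (h : v ≠ 0) : 0 < dotp v v := by
  rcases (dotp_self_nonneg v).lt_or_eq with h' | h'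
  · exact h'
  · exfalso; apply h; funext i
    have := Finset.sum_eq_zero_iff_of_nonneg (fun i _ => mul_self_nonneg (v i)) |>.mp h'.symm
    have hi := this i (Finset.mem_univ i)
    have := mul_self_eq_zero.mp hi
    simpa using this

lemma nrm_pos {n : ℕ} {v : Fin n → ℝ} (h : v ≠ 0) : 0 < nrm v :=
  Real.sqrt_pos.mpr (dotp_self_pos h)

lemma ratio_mem {n : ℕ} {u v : Fin n → ℝ} (hu : u ≠ 0) (hv : v ≠ 0) :
    dotp u v / (nrm u * nrm v) ∈ Set.Icc (-1 : ℝ) 1 := by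
  have h := abs_dotp_le u v
  have hp : 0 < nrm u * nrm v := mul_pos (nrm_pos hu) (nrm_pos hv)
  constructor
  · rw [le_div_iff₀ hp]; nlinarith [abs_le.mp h]
  · rw [div_le_one hp]; nlinarith [abs_le.mp h]

lemma cos_angl {n : ℕ} {u v : Fin n → ℝ} (hu : u ≠ 0) (hv : v ≠ 0) :
    Real.cos (angl u v) = dotp u v / (nrm u * nrm v) := by
  have h := ratio_mem hu hv
  exact Real.cos_arccos h.1 h.2

lemma angl_nonneg {n : ℕ} (u v : Fin n → ℝ) : 0 ≤ angl u v := Real.arccos_nonneg _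

lemma angl_le_pi {n : ℕ} (u v : Fin n → ℝ) : angl u v ≤ π := Real.arccos_le_pi _

lemma angl_self {n : ℕ} {v : Fin n → ℝ} (hv : v ≠ 0) : angl v v = 0 := by
  unfold angl
  rw [show dotp v v / (nrm v * nrm v) = 1 by
    rw [← nrm_sq]; field_simp [sq, (nrm_pos hv).ne']]
  exact Real.arccos_one

-- dotp bilinearity via dotProduct

lemma dotp_mulVec_symm {a b : ℕ} (A : Matrix (Fin a) (Fin b) ℝ) (x : Fin b → ℝ) (w : Fin a → ℝ) :
    dotp x (Aᵀ.mulVec w) = dotp (A.mulVec x) w := by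
  rw [dotp_eq_dot, dotp_eq_dot, Matrix.dotProduct_mulVec, Matrix.vecMul_transpose]

lemma dotp_prod {a b : ℕ} (A B : Matrix (Fin a) (Fin b) ℝ) (x y : Fin b → ℝ) :
    dotp (A.mulVec x) (B.mulVec y) = dotp x ((Aᵀ * B).mulVec y) := by
  rw [← Matrix.mulVec_mulVec, dotp_mulVec_symm]

lemma vecMulVec_mulVec {n : ℕ} (a b v : Fin n → ℝ) :
    (Matrix.vecMulVec a b).mulVec v = (dotp b v) • a := by
  funext i
  simp only [Matrix.mulVec, Matrix.vecMulVec_apply, dotProduct, Pi.smul_apply,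
    smul_eq_mul, dotp, Finset.sum_mul, Finset.mul_sum]
  exact Finset.sum_congr rfl fun j _ => by ring

lemma dotp_comm {n : ℕ} (u v : Fin n → ℝ) : dotp u v = dotp v u := by
  simp [dotp, mul_comm]

lemma dotp_smul_left {n : ℕ} (r : ℝ) (u v : Fin n → ℝ) : dotp (r • u) v = r * dotp u v := by
  simp [dotp, Finset.mul_sum, mul_assoc]

lemma dotp_smul_right {n : ℕ} (r : ℝ) (u v : Fin n → ℝ) : dotp u (r • v) = r * dotp u v := by
  simp [dotp, Finset.mul_sum]; exact Finset.sum_congr rfl fun j _ => by ring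

lemma dotp_sub_right {n : ℕ} (u v w : Fin n → ℝ) : dotp u (v - w) = dotp u v - dotp u w := by
  simp [dotp, mul_sub, Finset.sum_sub_distrib]

lemma dotp_sub_left {n : ℕ} (u v w : Fin n → ℝ) : dotp (u - v) w = dotp u w - dotp v w := by
  simp [dotp, sub_mul, Finset.sum_sub_distrib]

lemma dotp_add_right {n : ℕ} (u v w : Fin n → ℝ) : dotp u (v + w) = dotp u v + dotp u w := by
  simp [dotp, mul_add, Finset.sum_add_distrib]

lemma dotp_swap {n : ℕ} {x y : Fin n → ℝ} (hx : x ≠ 0) (hy : y ≠ 0) :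
    dotp x ((swapMat x y).mulVec y) = nrm x * nrm y := by
  have hX := nrm_pos hx; have hY := nrm_pos hy
  unfold swapMat
  dsimp only
  generalize hu : (nrm x)⁻¹ • x = u
  generalize hv : (nrm y)⁻¹ • y = v
  generalize hc : dotp u v = c
  generalize hw : v - c • u = w
  have hxx : dotp x x = nrm x ^ 2 := (nrm_sq x).symm
  have hyy : dotp y y = nrm y ^ 2 := (nrm_sq y).symm
  have duu : dotp u u = 1 := by
    rw [← hu, dotp_smul_left ((nrm x)⁻¹) x, dotp_smul_right ((nrm x)⁻¹) x x, hxx]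
    field_simp [sq]
  have dvv : dotp v v = 1 := by
    rw [← hv, dotp_smul_left ((nrm y)⁻¹) y, dotp_smul_right ((nrm y)⁻¹) y y, hyy]
    field_simp [sq]
  have duw : dotp u w = 0 := by
    rw [← hw, dotp_sub_right u v (c • u), dotp_smul_right c u u, duu, hc]; ring
  have dwv : dotp w v = 1 - c * c := by
    rw [← hw, dotp_sub_left v (c • u) v, dotp_smul_left c u v, dvv, hc]
  have dww : dotp w w = 1 - c * c := by
    nth_rewrite 2 [← hw]
    rw [dotp_sub_right w v (c • u), dotp_smul_right c w u, dwv, dotp_comm w u, duw]; ring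
  have hyv : y = nrm y • v := by
    rw [← hv, smul_smul, mul_inv_cancel₀ hY.ne', one_smul]
  have hxd : ∀ z : Fin n → ℝ, dotp x z = nrm x * dotp u z := by
    intro z; rw [← hu, dotp_smul_left]; field_simp
  have key : ∀ S : Matrix (Fin n) (Fin n) ℝ,
      dotp x (S.mulVec y) = nrm x * nrm y * dotp u (S.mulVec v) := by
    intro S
    have h1 : S.mulVec y = nrm y • S.mulVec v := by
      conv_lhs => rw [hyv]
      rw [Matrix.mulVec_smul]
    rw [h1, dotp_smul_right, hxd]; ring
  rw [key]
  have hone : dotp u ((if dotp w w = 0 then c • Matrix.vecMulVec u u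
      else c • Matrix.vecMulVec u u + Matrix.vecMulVec u w + Matrix.vecMulVec w u
        - (c / dotp w w) • Matrix.vecMulVec w w).mulVec v) = 1 := by
    split_ifs with h0
    · have hc2 : c * c = 1 := by rw [dww] at h0; linarith
      rw [Matrix.smul_mulVec, vecMulVec_mulVec u u v, dotp_smul_right,
        dotp_smul_right, duu, hc]
      nlinarith [hc2]
    · rw [Matrix.sub_mulVec, Matrix.add_mulVec, Matrix.add_mulVec,
        Matrix.smul_mulVec, Matrix.smul_mulVec,
        vecMulVec_mulVec u u v, vecMulVec_mulVec u w v, vecMulVec_mulVec w u v,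
        vecMulVec_mulVec w w v,
        dotp_sub_right, dotp_add_right, dotp_add_right,
        dotp_smul_right, dotp_smul_right, dotp_smul_right, dotp_smul_right,
        dotp_smul_right, dotp_smul_right, duu, duw, dwv, hc]
      ring
  rw [hone]; ring

lemma dotp_Q {k : ℕ} {x y : Fin k → ℝ} (hx : x ≠ 0) (hy : y ≠ 0) :
    dotp x ((Qmat x y).mulVec y)
      = ((π - angl x y) * Real.cos (angl x y) + Real.sin (angl x y)) / (2 * π)
          * (nrm x * nrm y) := by
  have hdxy : dotp x y = Real.cos (angl x y) * (nrm x * nrm y) := by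
    rw [cos_angl hx hy]
    field_simp [(nrm_pos hx).ne', (nrm_pos hy).ne']
  rw [Qmat, Matrix.add_mulVec, Matrix.smul_mulVec, Matrix.smul_mulVec,
    Matrix.one_mulVec, dotp_add_right, dotp_smul_right, dotp_smul_right, dotp_swap hx hy,
    hdxy]
  ring

lemma dotp_Q_self {k : ℕ} {x : Fin k → ℝ} (hx : x ≠ 0) :
    dotp x ((Qmat x x).mulVec x) = dotp x x / 2 := by
  have h := dotp_Q hx hx
  rw [angl_self hx] at h
  rw [h, Real.cos_zero, Real.sin_zero, ← nrm_sq]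
  field_simp [Real.pi_ne_zero, sq]
  ring

lemma wdc_err {a k : ℕ} {W : Matrix (Fin a) (Fin k) ℝ} {ε : ℝ} (hW : WDC W ε)
    {x y : Fin k → ℝ} (hx : x ≠ 0) (hy : y ≠ 0) :
    |dotp ((posPart W x).mulVec x) ((posPart W y).mulVec y)
        - dotp x ((Qmat x y).mulVec y)| ≤ ε * (nrm x * nrm y) := by
  rw [dotp_prod]
  set D := (posPart W x)ᵀ * posPart W y - Qmat x y with hD
  have hsplit : (posPart W x)ᵀ * posPart W y = Qmat x y + D := by rw [hD]; abel
  rw [hsplit, Matrix.add_mulVec, dotp_add_right, add_sub_cancel_left]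
  have h1 : |dotp x (D.mulVec y)| ≤ nrm x * nrm (D.mulVec y) := abs_dotp_le _ _
  have h2 : nrm (D.mulVec y) ≤ specNorm D * nrm y := nrm_mulVec_le D y
  have h3 : specNorm D ≤ ε := hW x y hx hy
  have h4 : 0 ≤ nrm x := nrm_nonneg x
  have h5 : 0 ≤ nrm y := nrm_nonneg y
  calc |dotp x (D.mulVec y)| ≤ nrm x * nrm (D.mulVec y) := h1
    _ ≤ nrm x * (specNorm D * nrm y) := mul_le_mul_of_nonneg_left h2 h4
    _ ≤ nrm x * (ε * nrm y) :=
        mul_le_mul_of_nonneg_left (mul_le_mul_of_nonneg_right h3 h5) h4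
    _ = ε * (nrm x * nrm y) := by ring

def vfun (θ : ℝ) : ℝ := (Real.cos θ * (π - θ) + Real.sin θ) / π

lemma sin_le_self {θ : ℝ} (h : 0 ≤ θ) : Real.sin θ ≤ θ := by
  rcases h.lt_or_eq with h' | h'
  · exact (Real.sin_lt h').le
  · simp [← h']

lemma vfun_abs_le {θ : ℝ} (h0 : 0 ≤ θ) (h1 : θ ≤ π) : |vfun θ| ≤ 1 := by
  have hs : 0 ≤ Real.sin θ := Real.sin_nonneg_of_nonneg_of_le_pi h0 h1
  have hs' : Real.sin θ ≤ θ := sin_le_self h0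
  have hc1 : Real.cos θ ≤ 1 := Real.cos_le_one θ
  have hc2 : -1 ≤ Real.cos θ := Real.neg_one_le_cos θ
  have hπ : 0 < π := Real.pi_pos
  rw [abs_le, vfun]
  constructor
  · rw [le_div_iff₀ hπ]; nlinarith
  · rw [div_le_one hπ]; nlinarith

lemma cos_gfun {θ : ℝ} (h0 : 0 ≤ θ) (h1 : θ ≤ π) :
    Real.cos (gfun θ) = (Real.cos θ * (π - θ) + Real.sin θ) / π := by
  have h := abs_le.mp (vfun_abs_le h0 h1)
  exact Real.cos_arccos h.1 h.2

lemma gfun_nonneg (θ : ℝ) : 0 ≤ gfun θ := Real.arccos_nonneg _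

lemma gfun_le_pi (θ : ℝ) : gfun θ ≤ π := Real.arccos_le_pi _

lemma vfun_lt_one {θ : ℝ} (h0 : 0 < θ) (h1 : θ < π) : vfun θ < 1 := by
  have hs : Real.sin θ < θ := Real.sin_lt h0
  have hc1 : Real.cos θ ≤ 1 := Real.cos_le_one θ
  have hπ : 0 < π := Real.pi_pos
  rw [vfun, div_lt_one hπ]
  nlinarith

lemma neg_one_lt_vfun {θ : ℝ} (h0 : 0 < θ) (h1 : θ < π) : -1 < vfun θ := by
  have hs : 0 ≤ Real.sin θ := Real.sin_nonneg_of_nonneg_of_le_pi h0.le h1.le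
  have hc2 : -1 ≤ Real.cos θ := Real.neg_one_le_cos θ
  have hπ : 0 < π := Real.pi_pos
  rw [vfun, lt_div_iff₀ hπ]
  nlinarith

lemma gfun_hasDerivAt {θ : ℝ} (h0 : 0 < θ) (h1 : θ < π) :
    HasDerivAt gfun
      ((1 / Real.sqrt (1 - vfun θ ^ 2)) * (Real.sin θ * (π - θ) / π)) θ := by
  have hv : HasDerivAt vfun (-(Real.sin θ * (π - θ)) / π) θ := by
    have h : HasDerivAt (fun t => (Real.cos t * (π - t) + Real.sin t) / π)
        ((-Real.sin θ * (π - θ) + Real.cos θ * (0 - 1) + Real.cos θ) / π) θ := by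
      exact (((Real.hasDerivAt_cos θ).mul ((hasDerivAt_const θ π).sub (hasDerivAt_id θ))).add
        (Real.hasDerivAt_sin θ)).div_const π
    convert h using 1
    · rfl
    ring
  have harc : HasDerivAt Real.arccos (-(1 / Real.sqrt (1 - vfun θ ^ 2))) (vfun θ) :=
    Real.hasDerivAt_arccos (neg_one_lt_vfun h0 h1).ne' (vfun_lt_one h0 h1).ne
  have := harc.comp θ hv
  exact this.congr_deriv (by ring)

lemma gfun_deriv_bound {θ : ℝ} (h0 : 0 < θ) (h1 : θ < π) :
    (1 / Real.sqrt (1 - vfun θ ^ 2)) * (Real.sin θ * (π - θ) / π) ∈ Set.Icc (0:ℝ) 1 := by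
  have hπ : 0 < π := Real.pi_pos
  have hv1 : vfun θ < 1 := vfun_lt_one h0 h1
  have hv2 : -1 < vfun θ := neg_one_lt_vfun h0 h1
  have hpos : 0 < 1 - vfun θ ^ 2 := by nlinarith
  have hsq : 0 < Real.sqrt (1 - vfun θ ^ 2) := Real.sqrt_pos.mpr hpos
  have hs : 0 ≤ Real.sin θ := Real.sin_nonneg_of_nonneg_of_le_pi h0.le h1.le
  have hsθ : Real.sin θ ≤ θ := sin_le_self h0.le
  have hsπθ : Real.sin θ ≤ π - θ := by
    rw [← Real.sin_pi_sub]
    exact sin_le_self (by linarith)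
  have hc1 : Real.cos θ ≤ 1 := Real.cos_le_one θ
  have h2 : (0:ℝ) ≤ π - θ := by linarith
  have hnum : 0 ≤ Real.sin θ * (π - θ) / π := by positivity
  have hππ : (0:ℝ) < π ^ 2 := by positivity
  have hpy := Real.sin_sq_add_cos_sq θ
  have hpyt : (Real.sin θ * (π - θ)) ^ 2 + (Real.cos θ * (π - θ)) ^ 2 = (π - θ) ^ 2 := by
    calc (Real.sin θ * (π - θ)) ^ 2 + (Real.cos θ * (π - θ)) ^ 2
        = (Real.sin θ ^ 2 + Real.cos θ ^ 2) * (π - θ) ^ 2 := by ring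
      _ = (π - θ) ^ 2 := by rw [hpy, one_mul]
  have hmain : (Real.sin θ * (π - θ)) ^ 2 + (Real.cos θ * (π - θ) + Real.sin θ) ^ 2 ≤ π ^ 2 := by
    nlinarith [hpyt, mul_nonneg (mul_nonneg hs h2) (sub_nonneg.2 hc1),
      mul_nonneg (sub_nonneg.2 hsθ) (by linarith : (0:ℝ) ≤ 2 * (π - θ) + θ + Real.sin θ)]
  have key : (Real.sin θ * (π - θ) / π) ^ 2 ≤ 1 - vfun θ ^ 2 := by
    have h3 : (Real.sin θ * (π - θ)) ^ 2 / π ^ 2 ≤ (π ^ 2 - (Real.cos θ * (π - θ) + Real.sin θ) ^ 2) / π ^ 2 :=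
      (div_le_div_iff_of_pos_right hππ).mpr (by linarith)
    calc (Real.sin θ * (π - θ) / π) ^ 2 = (Real.sin θ * (π - θ)) ^ 2 / π ^ 2 := by
          rw [div_pow]
      _ ≤ (π ^ 2 - (Real.cos θ * (π - θ) + Real.sin θ) ^ 2) / π ^ 2 := h3
      _ = 1 - ((Real.cos θ * (π - θ) + Real.sin θ) / π) ^ 2 := by
          field_simp
      _ = 1 - vfun θ ^ 2 := by rw [vfun]
  have hle : Real.sin θ * (π - θ) / π ≤ Real.sqrt (1 - vfun θ ^ 2) :=
    (Real.le_sqrt hnum hpos.le).mpr key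
  constructor
  · positivity
  · calc (1 / Real.sqrt (1 - vfun θ ^ 2)) * (Real.sin θ * (π - θ) / π)
        = (Real.sin θ * (π - θ) / π) / Real.sqrt (1 - vfun θ ^ 2) := by ring
      _ ≤ 1 := (div_le_one hsq).mpr hle

lemma gfun_lipschitz {a b : ℝ} (ha : 0 ≤ a) (hb : b ≤ π) (hab : a ≤ b) :
    |gfun b - gfun a| ≤ b - a := by
  rcases hab.lt_or_eq with h | h
  · have hcont : ContinuousOn gfun (Set.Icc a b) := by
      apply Continuous.continuousOn
      exact Real.continuous_arccos.comp
        (((Real.continuous_cos.mul (continuous_const.sub continuous_id)).add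
          Real.continuous_sin).div_const π)
    obtain ⟨c, hc, hslope⟩ := exists_hasDerivAt_eq_slope gfun
      (fun θ => (1 / Real.sqrt (1 - vfun θ ^ 2)) * (Real.sin θ * (π - θ) / π)) h hcont
      (fun θ hθ => gfun_hasDerivAt (lt_of_le_of_lt ha hθ.1) (lt_of_lt_of_le hθ.2 hb))
    have hb01 := gfun_deriv_bound (lt_of_le_of_lt ha hc.1) (lt_of_lt_of_le hc.2 hb)
    rw [eq_comm, div_eq_iff (by linarith : b - a ≠ 0)] at hslope
    rw [abs_le]
    have h1 := hb01.1
    have h2 := hb01.2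
    constructor <;> nlinarith
  · simp [h]

lemma gfun_lipschitz' {a b : ℝ} (ha : 0 ≤ a) (ha' : a ≤ π) (hb : 0 ≤ b) (hb' : b ≤ π) :
    |gfun a - gfun b| ≤ |a - b| := by
  rcases le_total a b with h | h
  · rw [abs_sub_comm (gfun a) (gfun b), abs_sub_comm a b,
      abs_of_nonneg (by linarith : (0:ℝ) ≤ b - a)]
    exact gfun_lipschitz ha hb' h
  · rw [abs_of_nonneg (by linarith : (0:ℝ) ≤ a - b)]
    exact gfun_lipschitz hb ha' h

lemma sin_le_sin_halfpi {s m : ℝ} (hs0 : 0 ≤ s) (hsm : s ≤ m) (hm : m ≤ π - s) :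
    Real.sin s ≤ Real.sin m := by
  have hs2 : s ≤ π / 2 := by linarith [Real.pi_pos]
  rcases le_total m (π / 2) with h | h
  · exact Real.strictMonoOn_sin.monotoneOn
      ⟨by linarith [Real.pi_pos], hs2⟩ ⟨by linarith [Real.pi_pos], h⟩ hsm
  · rw [← Real.sin_pi_sub m]
    exact Real.strictMonoOn_sin.monotoneOn
      ⟨by linarith [Real.pi_pos], hs2⟩ ⟨by linarith [Real.pi_pos], by linarith⟩ (by linarith)

lemma angle_from_cos_ord {α β ε : ℝ} (hβ0 : 0 ≤ β) (hα1 : α ≤ π) (hba : β ≤ α)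
    (hε0 : 0 < ε) (hε1 : ε ≤ 1 / 100) (h : Real.cos β - Real.cos α ≤ 5 * ε) :
    α - β ≤ 4 * Real.sqrt ε := by
  have hπ := Real.pi_pos
  have hs0 : 0 ≤ (α - β) / 2 := by linarith
  have hsm : (α - β) / 2 ≤ (α + β) / 2 := by linarith
  have hmflip : (α + β) / 2 ≤ π - (α - β) / 2 := by linarith
  have hcc : Real.cos β - Real.cos α
      = 2 * Real.sin ((α + β) / 2) * Real.sin ((α - β) / 2) := by
    rw [Real.cos_sub_cos, show (β - α) / 2 = -((α - β) / 2) by ring, Real.sin_neg,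
      show (β + α) / 2 = (α + β) / 2 by ring]
    ring
  have hss : 0 ≤ Real.sin ((α - β) / 2) :=
    Real.sin_nonneg_of_nonneg_of_le_pi hs0 (by linarith)
  have hmono0 := sin_le_sin_halfpi hs0 hsm hmflip
  have hkey : 2 * Real.sin ((α - β) / 2) ^ 2 ≤ 5 * ε := by nlinarith
  set t := Real.sqrt ε with ht
  have ht0 : 0 < t := Real.sqrt_pos.mpr hε0
  have ht2 : t ^ 2 = ε := Real.sq_sqrt hε0.le
  have ht1 : t ≤ 1 / 10 := by
    rw [ht, show (1:ℝ)/10 = Real.sqrt (1/100) by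
      rw [show (1:ℝ)/100 = (1/10)^2 by norm_num, Real.sqrt_sq (by norm_num)]]
    exact Real.sqrt_le_sqrt hε1
  by_contra hcon
  push_neg at hcon
  have hs2t : 2 * t < (α - β) / 2 := by linarith
  have hs12 : (α - β) / 2 ≤ π / 2 := by linarith
  have hmono : Real.sin (2 * t) ≤ Real.sin ((α - β) / 2) :=
    Real.strictMonoOn_sin.monotoneOn ⟨by linarith, by linarith⟩
      ⟨by linarith, hs12⟩ hs2t.le
  have hcube : 2 * t - (2 * t) ^ 3 / 4 < Real.sin (2 * t) :=
    lt_of_le_of_lt (by nlinarith [ht0]) (Real.sin_gt_sub_cube (by linarith))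
  have hpos : 0 < 2 * t - 2 * t ^ 3 := by nlinarith
  have hls : 2 * t - 2 * t ^ 3 ≤ Real.sin ((α - β) / 2) := by nlinarith
  have hsq : (2 * t - 2 * t ^ 3) ^ 2 ≤ Real.sin ((α - β) / 2) ^ 2 :=
    pow_le_pow_left₀ hpos.le hls 2
  nlinarith [hkey, hsq, ht0, ht1, ht2, sq_nonneg t, sq_nonneg (t*t)]

lemma angle_from_cos {α β ε : ℝ} (hα0 : 0 ≤ α) (hα1 : α ≤ π) (hβ0 : 0 ≤ β) (hβ1 : β ≤ π)
    (hε0 : 0 < ε) (hε1 : ε ≤ 1 / 100)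
    (h : |Real.cos α - Real.cos β| ≤ 5 * ε) : |α - β| ≤ 4 * Real.sqrt ε := by
  rcases le_total β α with hba | hab
  · rw [abs_of_nonneg (by linarith : (0:ℝ) ≤ α - β)]
    exact angle_from_cos_ord hβ0 hα1 hba hε0 hε1 (by cases abs_cases (Real.cos α - Real.cos β) <;> linarith)
  · rw [abs_of_nonpos (by linarith : α - β ≤ 0)]
    have : β - α ≤ 4 * Real.sqrt ε :=
      angle_from_cos_ord hα0 hβ1 hab hε0 hε1 (by cases abs_cases (Real.cos α - Real.cos β) <;> linarith)
    linarith

lemma ne_zero_of_dotp_pos {n : ℕ} {v : Fin n → ℝ} (h : 0 < dotp v v) : v ≠ 0 := by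
  intro hv; rw [hv] at h; simp [dotp] at h

set_option maxHeartbeats 1000000 in

lemma angle_step {a k : ℕ} {W : Matrix (Fin a) (Fin k) ℝ} {ε : ℝ} (hW : WDC W ε)
    (hε0 : 0 < ε) (hε1 : ε ≤ 1 / 100) {x y : Fin k → ℝ} (hx : x ≠ 0) (hy : y ≠ 0) :
    (posPart W x).mulVec x ≠ 0 ∧ (posPart W y).mulVec y ≠ 0 ∧
      |angl ((posPart W x).mulVec x) ((posPart W y).mulVec y) - gfun (angl x y)| ≤
        4 * Real.sqrt ε := by
  have hX := nrm_pos hx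
  have hY := nrm_pos hy
  have hπ := Real.pi_pos
  obtain ⟨x', hx'def⟩ : ∃ v, v = (posPart W x).mulVec x := ⟨_, rfl⟩
  obtain ⟨y', hy'def⟩ : ∃ v, v = (posPart W y).mulVec y := ⟨_, rfl⟩
  rw [← hx'def, ← hy'def]
  obtain ⟨θ, hθ⟩ : ∃ t, t = angl x y := ⟨_, rfl⟩
  rw [← hθ]
  obtain ⟨C, hC⟩ : ∃ c : ℝ, c = (Real.cos θ * (π - θ) + Real.sin θ) / π := ⟨_, rfl⟩
  have hθ0 : 0 ≤ θ := hθ ▸ angl_nonneg x y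
  have hθπ : θ ≤ π := hθ ▸ angl_le_pi x y
  have hCgf : Real.cos (gfun θ) = C := by rw [hC]; exact cos_gfun hθ0 hθπ
  have hCabs : |C| ≤ 1 := by rw [← hCgf]; exact Real.abs_cos_le_one _
  -- cross term
  have hQ : dotp x ((Qmat x y).mulVec y) = C / 2 * (nrm x * nrm y) := by
    rw [dotp_Q hx hy, ← hθ, hC]; ring
  have h1 : |dotp x' y' - C / 2 * (nrm x * nrm y)| ≤ ε * (nrm x * nrm y) := by
    rw [← hQ, hx'def, hy'def]; exact wdc_err hW hx hy
  -- self terms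
  have h2 : |dotp x' x' - nrm x ^ 2 / 2| ≤ ε * nrm x ^ 2 := by
    have h := wdc_err hW hx hx
    rw [dotp_Q_self hx, (nrm_sq x).symm, ← pow_two (nrm x), ← hx'def] at h
    exact h
  have h3 : |dotp y' y' - nrm y ^ 2 / 2| ≤ ε * nrm y ^ 2 := by
    have h := wdc_err hW hy hy
    rw [dotp_Q_self hy, (nrm_sq y).symm, ← pow_two (nrm y), ← hy'def] at h
    exact h
  have hX2 : 0 < nrm x ^ 2 := by positivity
  have hY2 : 0 < nrm y ^ 2 := by positivity
  have hx'pos : 0 < dotp x' x' := by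
    rcases abs_le.mp h2 with ⟨h2a, _⟩; nlinarith
  have hy'pos : 0 < dotp y' y' := by
    rcases abs_le.mp h3 with ⟨h3a, _⟩; nlinarith
  have hx' : x' ≠ 0 := ne_zero_of_dotp_pos hx'pos
  have hy' : y' ≠ 0 := ne_zero_of_dotp_pos hy'pos
  refine ⟨hx', hy', ?_⟩
  obtain ⟨N, hN⟩ : ∃ r, r = nrm x' * nrm y' := ⟨_, rfl⟩
  have hNpos : 0 < N := hN ▸ mul_pos (nrm_pos hx') (nrm_pos hy')
  have hNsq : N ^ 2 = dotp x' x' * dotp y' y' := by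
    rw [hN, mul_pow, nrm_sq, nrm_sq]
  -- bounds on N
  have hXY : 0 < nrm x * nrm y := mul_pos hX hY
  have hc0 : (0:ℝ) ≤ (1 / 2 - ε) * (nrm x * nrm y) := by nlinarith
  have u1 : (1 / 2 - ε) * nrm x ^ 2 ≤ dotp x' x' := by
    rcases abs_le.mp h2 with ⟨h2a, _⟩; nlinarith
  have u2 : (1 / 2 - ε) * nrm y ^ 2 ≤ dotp y' y' := by
    rcases abs_le.mp h3 with ⟨h3a, _⟩; nlinarith
  have v1 : dotp x' x' ≤ (1 / 2 + ε) * nrm x ^ 2 := by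
    rcases abs_le.mp h2 with ⟨_, h2b⟩; nlinarith
  have v2 : dotp y' y' ≤ (1 / 2 + ε) * nrm y ^ 2 := by
    rcases abs_le.mp h3 with ⟨_, h3b⟩; nlinarith
  have hNlo : (1 / 2 - ε) * (nrm x * nrm y) ≤ N := by
    have hlo : ((1 / 2 - ε) * (nrm x * nrm y)) ^ 2 ≤ N ^ 2 := by
      rw [hNsq]
      calc ((1 / 2 - ε) * (nrm x * nrm y)) ^ 2
          = ((1 / 2 - ε) * nrm x ^ 2) * ((1 / 2 - ε) * nrm y ^ 2) := by ring
        _ ≤ dotp x' x' * dotp y' y' :=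
            mul_le_mul u1 u2 (by nlinarith) hx'pos.le
    have := Real.sqrt_le_sqrt hlo
    rwa [Real.sqrt_sq hc0, Real.sqrt_sq hNpos.le] at this
  have hNhi : N ≤ (1 / 2 + ε) * (nrm x * nrm y) := by
    have hhi : N ^ 2 ≤ ((1 / 2 + ε) * (nrm x * nrm y)) ^ 2 := by
      rw [hNsq]
      calc dotp x' x' * dotp y' y'
          ≤ ((1 / 2 + ε) * nrm x ^ 2) * ((1 / 2 + ε) * nrm y ^ 2) :=
            mul_le_mul v1 v2 hy'pos.le (by nlinarith)
        _ = ((1 / 2 + ε) * (nrm x * nrm y)) ^ 2 := by ring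
    have := Real.sqrt_le_sqrt hhi
    rwa [Real.sqrt_sq hNpos.le, Real.sqrt_sq (by nlinarith)] at this
  -- cosine of the new angle
  have hcos' : Real.cos (angl x' y') = dotp x' y' / N := by
    rw [cos_angl hx' hy', hN]
  have hNmid : |N - nrm x * nrm y / 2| ≤ ε * (nrm x * nrm y) := by
    rw [abs_le]; constructor <;> nlinarith
  have hnum : |dotp x' y' - C * N| ≤ 2 * ε * (nrm x * nrm y) := by
    have : dotp x' y' - C * N
        = (dotp x' y' - C / 2 * (nrm x * nrm y)) - C * (N - nrm x * nrm y / 2) := by ring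
    rw [this]
    have habs : |C * (N - nrm x * nrm y / 2)| ≤ ε * (nrm x * nrm y) := by
      rw [abs_mul]
      calc |C| * |N - nrm x * nrm y / 2| ≤ 1 * (ε * (nrm x * nrm y)) :=
            mul_le_mul hCabs hNmid (abs_nonneg _) zero_le_one
        _ = ε * (nrm x * nrm y) := by ring
    calc |dotp x' y' - C / 2 * (nrm x * nrm y) - C * (N - nrm x * nrm y / 2)|
        ≤ |dotp x' y' - C / 2 * (nrm x * nrm y)| + |C * (N - nrm x * nrm y / 2)| :=
          abs_sub _ _
      _ ≤ 2 * ε * (nrm x * nrm y) := by linarith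
  have hcosdiff : |Real.cos (angl x' y') - C| ≤ 5 * ε := by
    rw [hcos']
    have heq : dotp x' y' / N - C = (dotp x' y' - C * N) / N := by
      field_simp
    rw [heq, abs_div, abs_of_pos hNpos, div_le_iff₀ hNpos]
    have step1 : (2:ℝ) * ε ≤ 5 * ε * (1 / 2 - ε) := by nlinarith
    calc |dotp x' y' - C * N| ≤ 2 * ε * (nrm x * nrm y) := hnum
      _ ≤ 5 * ε * (1 / 2 - ε) * (nrm x * nrm y) :=
          mul_le_mul_of_nonneg_right step1 hXY.le
      _ = 5 * ε * ((1 / 2 - ε) * (nrm x * nrm y)) := by ring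
      _ ≤ 5 * ε * N := mul_le_mul_of_nonneg_left hNlo (by nlinarith)
  rw [← hCgf] at hcosdiff
  exact angle_from_cos (angl_nonneg x' y') (angl_le_pi x' y') (gfun_nonneg θ)
    (gfun_le_pi θ) hε0 hε1 hcosdiff

lemma thetaSeq_mem {θ₀ : ℝ} (h0 : 0 ≤ θ₀) (h1 : θ₀ ≤ π) (i : ℕ) :
    0 ≤ thetaSeq θ₀ i ∧ thetaSeq θ₀ i ≤ π := by
  cases i with
  | zero => exact ⟨h0, h1⟩
  | succ j => exact ⟨gfun_nonneg _, gfun_le_pi _⟩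

lemma main_ind (d : ℕ) (ε : ℝ) (hε0 : 0 < ε) (hε1 : ε ≤ 1 / 100)
    (n : ℕ → ℕ) (W : ∀ i : ℕ, Matrix (Fin (n (i + 1))) (Fin (n i)) ℝ)
    (hW : ∀ i < d, WDC (W i) ε)
    (x y : Fin (n 0) → ℝ) (hx : x ≠ 0) (hy : y ≠ 0) :
    ∀ i ≤ d, (layerProd n W i x).mulVec x ≠ 0 ∧ (layerProd n W i y).mulVec y ≠ 0 ∧
      |angl ((layerProd n W i x).mulVec x) ((layerProd n W i y).mulVec y) -
          thetaSeq (angl x y) i| ≤ 4 * i * Real.sqrt ε := by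
  intro i
  induction i with
  | zero =>
    intro _
    simp only [layerProd, Matrix.one_mulVec, thetaSeq]
    exact ⟨hx, hy, by simp [Real.sqrt_nonneg]⟩
  | succ j ih =>
    intro hjd
    have hjd' : j < d := hjd
    obtain ⟨hxj, hyj, hang⟩ := ih (le_of_lt hjd')
    have step := angle_step (hW j hjd') hε0 hε1 hxj hyj
    obtain ⟨hx1, hy1, hstep⟩ := step
    have hmx : (layerProd n W (j+1) x).mulVec x
        = (posPart (W j) ((layerProd n W j x).mulVec x)).mulVec
            ((layerProd n W j x).mulVec x) := by
      show (posPart (W j) ((layerProd n W j x).mulVec x) * layerProd n W j x).mulVec x = _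
      rw [← Matrix.mulVec_mulVec]
    have hmy : (layerProd n W (j+1) y).mulVec y
        = (posPart (W j) ((layerProd n W j y).mulVec y)).mulVec
            ((layerProd n W j y).mulVec y) := by
      show (posPart (W j) ((layerProd n W j y).mulVec y) * layerProd n W j y).mulVec y = _
      rw [← Matrix.mulVec_mulVec]
    rw [hmx, hmy]
    refine ⟨hx1, hy1, ?_⟩
    have hθ0 : 0 ≤ angl x y := angl_nonneg x y
    have hθπ : angl x y ≤ π := angl_le_pi x y
    have hlip : |gfun (angl ((layerProd n W j x).mulVec x) ((layerProd n W j y).mulVec y))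
        - gfun (thetaSeq (angl x y) j)| ≤
        |angl ((layerProd n W j x).mulVec x) ((layerProd n W j y).mulVec y)
          - thetaSeq (angl x y) j| :=
      gfun_lipschitz' (angl_nonneg _ _) (angl_le_pi _ _)
        (thetaSeq_mem hθ0 hθπ j).1 (thetaSeq_mem hθ0 hθπ j).2
    have htseq : thetaSeq (angl x y) (j + 1) = gfun (thetaSeq (angl x y) j) := rfl
    rw [htseq]
    have tri := abs_sub_le
      (angl ((posPart (W j) ((layerProd n W j x).mulVec x)).mulVec
          ((layerProd n W j x).mulVec x))
        ((posPart (W j) ((layerProd n W j y).mulVec y)).mulVec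
          ((layerProd n W j y).mulVec y)))
      (gfun (angl ((layerProd n W j x).mulVec x) ((layerProd n W j y).mulVec y)))
      (gfun (thetaSeq (angl x y) j))
    have hcast : ((j : ℝ) + 1) = ((j + 1 : ℕ) : ℝ) := by push_cast; ring
    calc |angl _ _ - gfun (thetaSeq (angl x y) j)|
        ≤ _ := tri
      _ ≤ 4 * Real.sqrt ε + 4 * j * Real.sqrt ε := by
          have := le_trans hlip hang
          linarith [hstep, this]
      _ = 4 * ((j : ℝ) + 1) * Real.sqrt ε := by ring
      _ = 4 * ((j + 1 : ℕ) : ℝ) * Real.sqrt ε := by rw [hcast]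

set_option maxHeartbeats 1000000 in
/-- under the WDC, the angle between the outputs concentrates
around `g^{∘d}` of the angle between the inputs. -/
theorem statement7 (d : ℕ) (hd : 2 ≤ d) (ε : ℝ) (hε0 : 0 < ε)
    (hε1 : ε < ((d : ℝ) ^ 4)⁻¹ * (1 / (16 * π)) ^ 2)
    (n : ℕ → ℕ) (hn : ∀ i < d, n i < n (i + 1))
    (W : ∀ i : ℕ, Matrix (Fin (n (i + 1))) (Fin (n i)) ℝ)
    (hW : ∀ i < d, WDC (W i) ε) :
    ∀ x y : Fin (n 0) → ℝ, x ≠ 0 → y ≠ 0 →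
      |angl ((layerProd n W d x).mulVec x) ((layerProd n W d y).mulVec y) -
          thetaSeq (angl x y) d| ≤
        4 * d * Real.sqrt ε := by
  intro x y hx hy
  have hπ3 : (3:ℝ) < π := Real.pi_gt_three
  have hd2 : (2:ℝ) ≤ (d:ℝ) := by exact_mod_cast hd
  have hd4 : (16:ℝ) ≤ (d:ℝ) ^ 4 := by
    calc (16:ℝ) = 2 ^ 4 := by norm_num
      _ ≤ (d:ℝ) ^ 4 := pow_le_pow_left₀ (by norm_num) hd2 4
  have h1 : ((d : ℝ) ^ 4)⁻¹ ≤ 16⁻¹ := by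
    apply inv_anti₀ (by norm_num) hd4
  have h2 : (1 / (16 * π)) ^ 2 ≤ (1 / 48) ^ 2 := by
    have ha : (0:ℝ) ≤ 1 / (16 * π) := by positivity
    have hb : (1:ℝ) / (16 * π) ≤ 1 / 48 := by
      apply one_div_le_one_div_of_le (by norm_num)
      nlinarith
    exact pow_le_pow_left₀ ha hb 2
  have hεsmall : ε ≤ 1 / 100 := by
    have h3 : ((d : ℝ) ^ 4)⁻¹ * (1 / (16 * π)) ^ 2 ≤ 16⁻¹ * (1 / 48) ^ 2 := by
      apply mul_le_mul h1 h2 (by positivity) (by norm_num)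
    have : ε < 16⁻¹ * (1 / 48) ^ 2 := lt_of_lt_of_le hε1 h3
    nlinarith
  exact (main_ind d ε hε0 hεsmall n W hW x y hx hy d le_rfl).2.2
end DPR
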